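/- (Theorem 2, uniqueness part: dominant diagonal condition.) Assume f and g are twice continuously differentiable on [0,1], g strictly positive and nondecreasing on [0,1], δ ∈ [0,1], and suppose the dominant-diagonal condition holds on Ω: for every (x,y) ∈ Ω, −∂²U_sl/∂x²(x,y) > (1−δ)·(g(y) + y·g'(y)) and −∂²U_db/∂y²(x,y) > (1+δ)·(g(y) + y·g'(y)) (the right-hand sides being the respective cross partial derivatives ∂²U_sl/∂(−x)∂y and ∂²U_db/∂(−x)∂y). Then the market share equilibrium is unique: there is at most one pair (x*, y*) ∈ Ω such that x* maximizes U_sl(·, y*) over [0,1] and y* maximizes U_db(x*, ·) over [0,1]. -/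

import Mathlib

open Set

/-- The feasible set of market shares: Ω = {(x,y) : x ≥ 0, y ≥ 0, x + y ≤ 1}. -/
def Omega : Set (ℝ × ℝ) := {p | 0 ≤ p.1 ∧ 0 ≤ p.2 ∧ p.1 + p.2 ≤ 1}

/-- Leasing price as a function of market shares:
P_l(x,y) = (1−x)(R_L − f(1−x) − g(y)) + (1−x−y)·g(y). -/
noncomputable def Pl (RL : ℝ) (f g : ℝ → ℝ) (x y : ℝ) : ℝ :=
  (1 - x) * (RL - f (1 - x) - g y) + (1 - x - y) * g y

/-- Information price as a function of market shares: P_a(x,y) = (1−x−y)·g(y). -/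
noncomputable def Pa (g : ℝ → ℝ) (x y : ℝ) : ℝ := (1 - x - y) * g y

/-- Licensee's market-share payoff under the revenue-sharing scheme:
U_sl(x,y) = (P_l(x,y) − c_l)·x·(1−δ). -/
noncomputable def Usl (RL : ℝ) (f g : ℝ → ℝ) (cl δ : ℝ) (x y : ℝ) : ℝ :=
  (Pl RL f g x y - cl) * x * (1 - δ)

/-- Database's market-share payoff under the revenue-sharing scheme:
U_db(x,y) = (P_a(x,y) − c_a)·y + (P_l(x,y) − c_l)·x·δ. -/
noncomputable def Udb (RL : ℝ) (f g : ℝ → ℝ) (ca cl δ : ℝ) (x y : ℝ) : ℝ :=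
  (Pa g x y - ca) * y + (Pl RL f g x y - cl) * x * δ

/-- Licensee's market-share payoff under the wholesale-pricing scheme:
U_sl^{II}(x,y) = (P_l(x,y) − w − c_l)·x. -/
noncomputable def UslII (RL : ℝ) (f g : ℝ → ℝ) (w cl : ℝ) (x y : ℝ) : ℝ :=
  (Pl RL f g x y - w - cl) * x

/-- Database's market-share payoff under the wholesale-pricing scheme:
U_db^{II}(x,y) = P_a(x,y)·y + w·x − c_a·y. -/
noncomputable def UdbII (g : ℝ → ℝ) (w ca : ℝ) (x y : ℝ) : ℝ :=
  Pa g x y * y + w * x - ca * y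

/-- Variational inequality at a constrained maximizer on `[0,1]`. -/
lemma stmt14_aux_VI {F : ℝ → ℝ} {d a b : ℝ} (ha : a ∈ Icc (0:ℝ) 1) (hb : b ∈ Icc (0:ℝ) 1)
    (hmax : ∀ x ∈ Icc (0:ℝ) 1, F x ≤ F a) (hF : HasDerivWithinAt F d (Icc 0 1) a) :
    d * (b - a) ≤ 0 := by
  have hcone : b - a ∈ posTangentConeAt (Icc (0:ℝ) 1) a :=
    sub_mem_posTangentConeAt_of_segment_subset ((convex_Icc (0:ℝ) 1).segment_subset ha hb)
  have hmax' : IsLocalMaxOn F (Icc (0:ℝ) 1) a := (isMaxOn_iff.mpr hmax).localize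
  have h := hmax'.hasFDerivWithinAt_nonpos hF.hasFDerivWithinAt hcone
  simp only [ContinuousLinearMap.smulRight_apply, ContinuousLinearMap.one_apply, ContinuousLinearMap.toSpanSingleton_apply,
    smul_eq_mul] at h
  linarith [h, mul_comm d (b - a)]

/-- The derivative of a function monotone on `[0,1]` is nonnegative there. -/
lemma stmt14_aux_gprime_nonneg {g g' : ℝ → ℝ} (hg_mono : MonotoneOn g (Icc 0 1))
    (hg' : ∀ t ∈ Icc (0:ℝ) 1, HasDerivWithinAt g (g' t) (Icc 0 1) t)
    {y : ℝ} (hy : y ∈ Icc (0:ℝ) 1) : 0 ≤ g' y := by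
  rcases eq_or_lt_of_le hy.1 with h0 | h0
  · have hmin : IsLocalMinOn g (Icc (0:ℝ) 1) y := by
      apply IsMinOn.localize
      apply isMinOn_iff.mpr
      intro t ht
      exact hg_mono hy ht (by rw [← h0]; exact ht.1)
    have hcone : (1:ℝ) - y ∈ posTangentConeAt (Icc (0:ℝ) 1) y :=
      sub_mem_posTangentConeAt_of_segment_subset
        ((convex_Icc (0:ℝ) 1).segment_subset hy (by constructor <;> norm_num))
    have h := hmin.hasFDerivWithinAt_nonneg (hg' y hy).hasFDerivWithinAt hcone
    simp only [ContinuousLinearMap.smulRight_apply, ContinuousLinearMap.one_apply, ContinuousLinearMap.toSpanSingleton_apply,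
      smul_eq_mul] at h
    nlinarith [h, h0]
  · have hmax : IsLocalMaxOn g (Icc (0:ℝ) y) y := by
      apply IsMaxOn.localize
      apply isMaxOn_iff.mpr
      intro t ht
      exact hg_mono ⟨ht.1, le_trans ht.2 hy.2⟩ hy ht.2
    have hF : HasDerivWithinAt g (g' y) (Icc 0 y) y :=
      (hg' y hy).mono (Icc_subset_Icc le_rfl hy.2)
    have hcone : (0:ℝ) - y ∈ posTangentConeAt (Icc (0:ℝ) y) y :=
      sub_mem_posTangentConeAt_of_segment_subset
        ((convex_Icc (0:ℝ) y).segment_subset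
          (by constructor <;> [exact le_of_lt h0; exact le_rfl])
          (by constructor <;> [exact le_rfl; exact le_of_lt h0]))
    have h := hmax.hasFDerivWithinAt_nonpos hF.hasFDerivWithinAt hcone
    simp only [ContinuousLinearMap.smulRight_apply, ContinuousLinearMap.one_apply, ContinuousLinearMap.toSpanSingleton_apply,
      smul_eq_mul] at h
    nlinarith [h, h0]

/-- Cross-variation identity for the licensee's marginal payoff. -/
lemma stmt14_aux_keyA (RL : ℝ) (f g : ℝ → ℝ) (cl δ : ℝ) (Uslx : ℝ → ℝ → ℝ)
    (hUslx : ∀ y ∈ Set.Icc (0:ℝ) 1, ∀ x ∈ Set.Icc (0:ℝ) 1,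
      HasDerivWithinAt (fun t => Usl RL f g cl δ t y) (Uslx x y) (Set.Icc 0 1) x) :
    ∀ x ∈ Icc (0:ℝ) 1, ∀ y ∈ Icc (0:ℝ) 1, ∀ y' ∈ Icc (0:ℝ) 1,
      Uslx x y = Uslx x y' + (1-δ) * (y' * g y' - y * g y) := by
  have hU : UniqueDiffOn ℝ (Icc (0:ℝ) 1) := uniqueDiffOn_Icc one_pos
  intro x hx y hy y' hy'
  have h1 : HasDerivWithinAt (fun t => Usl RL f g cl δ t y - Usl RL f g cl δ t y')
      (Uslx x y - Uslx x y') (Icc 0 1) x := (hUslx y hy x hx).sub (hUslx y' hy' x hx)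
  have h2 : HasDerivWithinAt (fun t => Usl RL f g cl δ t y - Usl RL f g cl δ t y')
      ((1-δ) * (y' * g y' - y * g y)) (Icc 0 1) x := by
    have h3 : (fun t : ℝ => ((1-δ) * (y' * g y' - y * g y)) * t)
        = fun t => Usl RL f g cl δ t y - Usl RL f g cl δ t y' := by
      funext t; simp only [Usl, Pl]; ring
    rw [← h3]
    simpa using ((hasDerivAt_id x).const_mul ((1-δ) * (y' * g y' - y * g y))).hasDerivWithinAt
  have := UniqueDiffWithinAt.eq_deriv _ (hU x hx) h1 h2
  linarith [this]

/-- The second own-derivative of the licensee's payoff does not depend on `y`. -/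
lemma stmt14_aux_keyB (RL : ℝ) (f g : ℝ → ℝ) (cl δ : ℝ) (Uslx Uslxx : ℝ → ℝ → ℝ)
    (hUslx : ∀ y ∈ Set.Icc (0:ℝ) 1, ∀ x ∈ Set.Icc (0:ℝ) 1,
      HasDerivWithinAt (fun t => Usl RL f g cl δ t y) (Uslx x y) (Set.Icc 0 1) x)
    (hUslxx : ∀ y ∈ Set.Icc (0:ℝ) 1, ∀ x ∈ Set.Icc (0:ℝ) 1,
      HasDerivWithinAt (fun t => Uslx t y) (Uslxx x y) (Set.Icc 0 1) x) :
    ∀ x ∈ Icc (0:ℝ) 1, ∀ y ∈ Icc (0:ℝ) 1, ∀ y' ∈ Icc (0:ℝ) 1,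
      Uslxx x y = Uslxx x y' := by
  have hU : UniqueDiffOn ℝ (Icc (0:ℝ) 1) := uniqueDiffOn_Icc one_pos
  intro x hx y hy y' hy'
  have h1 : HasDerivWithinAt (fun t => Uslx t y - Uslx t y')
      (Uslxx x y - Uslxx x y') (Icc 0 1) x := (hUslxx y hy x hx).sub (hUslxx y' hy' x hx)
  have h2 : HasDerivWithinAt (fun t => Uslx t y - Uslx t y') 0 (Icc 0 1) x := by
    apply HasDerivWithinAt.congr
      (hasDerivWithinAt_const x (Icc 0 1) ((1-δ) * (y' * g y' - y * g y)))
    · intro t ht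
      rw [stmt14_aux_keyA RL f g cl δ Uslx hUslx t ht y hy y' hy']; ring
    · rw [stmt14_aux_keyA RL f g cl δ Uslx hUslx x hx y hy y' hy']; ring
  have := UniqueDiffWithinAt.eq_deriv _ (hU x hx) h1 h2
  linarith [this]

/-- Cross-variation identity for the database's marginal payoff. -/
lemma stmt14_aux_keyC (RL : ℝ) (f g g' : ℝ → ℝ) (ca cl δ : ℝ) (Udby : ℝ → ℝ → ℝ)
    (hg' : ∀ t ∈ Set.Icc (0:ℝ) 1, HasDerivWithinAt g (g' t) (Set.Icc 0 1) t)
    (hUdby : ∀ x ∈ Set.Icc (0:ℝ) 1, ∀ y ∈ Set.Icc (0:ℝ) 1,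
      HasDerivWithinAt (fun t => Udb RL f g ca cl δ x t) (Udby x y) (Set.Icc 0 1) y) :
    ∀ y ∈ Icc (0:ℝ) 1, ∀ x ∈ Icc (0:ℝ) 1, ∀ x' ∈ Icc (0:ℝ) 1,
      Udby x y = Udby x' y + (1+δ) * (x' - x) * (g y + y * g' y) := by
  have hU : UniqueDiffOn ℝ (Icc (0:ℝ) 1) := uniqueDiffOn_Icc one_pos
  intro y hy x hx x' hx'
  have h1 : HasDerivWithinAt (fun t => Udb RL f g ca cl δ x t - Udb RL f g ca cl δ x' t)
      (Udby x y - Udby x' y) (Icc 0 1) y := (hUdby x hx y hy).sub (hUdby x' hx' y hy)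
  have h2 : HasDerivWithinAt (fun t => Udb RL f g ca cl δ x t - Udb RL f g ca cl δ x' t)
      ((1+δ) * (x' - x) * (g y + y * g' y)) (Icc 0 1) y := by
    have h3 : (fun t : ℝ => (δ * (x * (1-x) * (RL - f (1-x)) - x' * (1-x') * (RL - f (1-x')))
          - cl * δ * (x - x')) + ((1+δ) * (x' - x)) * (t * g t))
        = fun t => Udb RL f g ca cl δ x t - Udb RL f g ca cl δ x' t := by
      funext t; simp only [Udb, Pl, Pa]; ring
    rw [← h3]
    have h4 : HasDerivWithinAt (fun t : ℝ => t * g t) (g y + y * g' y) (Icc 0 1) y := by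
      simpa [Pi.mul_def] using (hasDerivWithinAt_id y (Icc (0:ℝ) 1)).mul (hg' y hy)
    exact (h4.const_mul _).const_add _
  have := UniqueDiffWithinAt.eq_deriv _ (hU y hy) h1 h2
  linarith [this]

/-- `g'` is differentiable on `[0,1]` when `g` is `C²` there. -/
lemma stmt14_aux_gprime_diff {g g' : ℝ → ℝ} (hg_C2 : ContDiffOn ℝ 2 g (Set.Icc 0 1))
    (hg' : ∀ t ∈ Set.Icc (0:ℝ) 1, HasDerivWithinAt g (g' t) (Set.Icc 0 1) t) :
    ∀ y ∈ Icc (0:ℝ) 1, DifferentiableWithinAt ℝ g' (Icc 0 1) y := by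
  have hU : UniqueDiffOn ℝ (Icc (0:ℝ) 1) := uniqueDiffOn_Icc one_pos
  have hderivg : ∀ y ∈ Icc (0:ℝ) 1, derivWithin g (Icc 0 1) y = g' y :=
    fun y hy => (hg' y hy).derivWithin (hU y hy)
  have hg'C1 : ContDiffOn ℝ 1 (derivWithin g (Icc 0 1)) (Icc 0 1) :=
    hg_C2.derivWithin hU (by norm_num)
  intro y hy
  exact ((hg'C1.differentiableOn one_ne_zero) y hy).congr
    (fun t ht => (hderivg t ht).symm) (hderivg y hy).symm

set_option maxHeartbeats 1000000 in
/-- Theorem 2, uniqueness part: dominant diagonal condition: under the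
dominant-diagonal condition on Ω there is at most one market share equilibrium of the
revenue-sharing market share competition game. -/
theorem stmt14
    (RL : ℝ) (f g g' : ℝ → ℝ)
    (hf_C2 : ContDiffOn ℝ 2 f (Set.Icc 0 1))
    (hg_C2 : ContDiffOn ℝ 2 g (Set.Icc 0 1))
    (hg_pos : ∀ t ∈ Set.Icc (0:ℝ) 1, 0 < g t)
    (hg_mono : MonotoneOn g (Set.Icc 0 1))
    (hRL : ∀ p ∈ Omega, f (1 - p.1) + g p.2 < RL)
    (cl ca δ : ℝ) (hδ : 0 ≤ δ) (hδ1 : δ ≤ 1)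
    (hg' : ∀ t ∈ Set.Icc (0:ℝ) 1, HasDerivWithinAt g (g' t) (Set.Icc 0 1) t)
    -- first and second partial derivatives of the payoffs in own strategies
    (Uslx Uslxx Udby Udbyy : ℝ → ℝ → ℝ)
    (hUslx : ∀ y ∈ Set.Icc (0:ℝ) 1, ∀ x ∈ Set.Icc (0:ℝ) 1,
      HasDerivWithinAt (fun t => Usl RL f g cl δ t y) (Uslx x y) (Set.Icc 0 1) x)
    (hUslxx : ∀ y ∈ Set.Icc (0:ℝ) 1, ∀ x ∈ Set.Icc (0:ℝ) 1,
      HasDerivWithinAt (fun t => Uslx t y) (Uslxx x y) (Set.Icc 0 1) x)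
    (hUdby : ∀ x ∈ Set.Icc (0:ℝ) 1, ∀ y ∈ Set.Icc (0:ℝ) 1,
      HasDerivWithinAt (fun t => Udb RL f g ca cl δ x t) (Udby x y) (Set.Icc 0 1) y)
    (hUdbyy : ∀ x ∈ Set.Icc (0:ℝ) 1, ∀ y ∈ Set.Icc (0:ℝ) 1,
      HasDerivWithinAt (fun t => Udby x t) (Udbyy x y) (Set.Icc 0 1) y)
    -- the dominant-diagonal condition on Ω
    (hdom : ∀ p ∈ Omega,
      -Uslxx p.1 p.2 > (1 - δ) * (g p.2 + p.2 * g' p.2) ∧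
      -Udbyy p.1 p.2 > (1 + δ) * (g p.2 + p.2 * g' p.2)) :
    ∀ p q : ℝ × ℝ, p ∈ Omega → q ∈ Omega →
      (∀ x ∈ Set.Icc (0:ℝ) 1, Usl RL f g cl δ x p.2 ≤ Usl RL f g cl δ p.1 p.2) →
      (∀ y ∈ Set.Icc (0:ℝ) 1, Udb RL f g ca cl δ p.1 y ≤ Udb RL f g ca cl δ p.1 p.2) →
      (∀ x ∈ Set.Icc (0:ℝ) 1, Usl RL f g cl δ x q.2 ≤ Usl RL f g cl δ q.1 q.2) →
      (∀ y ∈ Set.Icc (0:ℝ) 1, Udb RL f g ca cl δ q.1 y ≤ Udb RL f g ca cl δ q.1 q.2) →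
      p = q := by
  intro p q hp hq hpx hpy hqx hqy
  obtain ⟨hp1, hp2, hp12⟩ := hp
  obtain ⟨hq1, hq2, hq12⟩ := hq
  have hp1le : p.1 ≤ 1 := by linarith
  have hp2le : p.2 ≤ 1 := by linarith
  have hq1le : q.1 ≤ 1 := by linarith
  have hq2le : q.2 ≤ 1 := by linarith
  have hp1I : p.1 ∈ Icc (0:ℝ) 1 := ⟨hp1, hp1le⟩
  have hp2I : p.2 ∈ Icc (0:ℝ) 1 := ⟨hp2, hp2le⟩
  have hq1I : q.1 ∈ Icc (0:ℝ) 1 := ⟨hq1, hq1le⟩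
  have hq2I : q.2 ∈ Icc (0:ℝ) 1 := ⟨hq2, hq2le⟩
  have h0I : (0:ℝ) ∈ Icc (0:ℝ) 1 := left_mem_Icc.mpr zero_le_one
  have h1I : (1:ℝ) ∈ Icc (0:ℝ) 1 := right_mem_Icc.mpr zero_le_one
  by_contra hne
  set Δx := q.1 - p.1 with hΔx
  set Δy := q.2 - p.2 with hΔy
  set xt : ℝ → ℝ := fun t => p.1 + t * Δx with hxt
  set yt : ℝ → ℝ := fun t => p.2 + t * Δy with hyt
  have hxtD : ∀ t : ℝ, HasDerivAt xt Δx t := by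
    intro t; rw [hxt]
    simpa using ((hasDerivAt_id t).mul_const Δx).const_add p.1
  have hytD : ∀ t : ℝ, HasDerivAt yt Δy t := by
    intro t; rw [hyt]
    simpa using ((hasDerivAt_id t).mul_const Δy).const_add p.2
  have hxt0 : xt 0 = p.1 := by rw [hxt]; ring
  have hxt1 : xt 1 = q.1 := by rw [hxt, hΔx]; ring
  have hyt0 : yt 0 = p.2 := by rw [hyt]; ring
  have hyt1 : yt 1 = q.2 := by rw [hyt, hΔy]; ring
  have hmapx : MapsTo xt (Icc (0:ℝ) 1) (Icc (0:ℝ) 1) := by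
    intro t ht
    rw [mem_Icc] at ht
    simp only [hxt, hΔx, mem_Icc]
    constructor <;>
      nlinarith [mul_nonneg ht.1 hq1, mul_nonneg (sub_nonneg.mpr ht.2) hp1,
        mul_nonneg ht.1 (sub_nonneg.mpr hq1le),
        mul_nonneg (sub_nonneg.mpr ht.2) (sub_nonneg.mpr hp1le)]
  have hmapy : MapsTo yt (Icc (0:ℝ) 1) (Icc (0:ℝ) 1) := by
    intro t ht
    rw [mem_Icc] at ht
    simp only [hyt, hΔy, mem_Icc]
    constructor <;>
      nlinarith [mul_nonneg ht.1 hq2, mul_nonneg (sub_nonneg.mpr ht.2) hp2,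
        mul_nonneg ht.1 (sub_nonneg.mpr hq2le),
        mul_nonneg (sub_nonneg.mpr ht.2) (sub_nonneg.mpr hp2le)]
  have hseg : ∀ t ∈ Icc (0:ℝ) 1, (xt t, yt t) ∈ Omega := by
    intro t ht
    rw [mem_Icc] at ht
    refine ⟨?_, ?_, ?_⟩ <;> simp only [hxt, hyt, hΔx, hΔy] <;>
      nlinarith [mul_nonneg ht.1 hq1, mul_nonneg (sub_nonneg.mpr ht.2) hp1,
        mul_nonneg ht.1 hq2, mul_nonneg (sub_nonneg.mpr ht.2) hp2,
        mul_nonneg ht.1 (sub_nonneg.mpr hq12),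
        mul_nonneg (sub_nonneg.mpr ht.2) (sub_nonneg.mpr hp12)]
  have hgcont : ContinuousOn g (Icc 0 1) := fun u hu => (hg' u hu).continuousWithinAt
  have hg'diffOn : ∀ u ∈ Icc (0:ℝ) 1, DifferentiableWithinAt ℝ g' (Icc 0 1) u :=
    stmt14_aux_gprime_diff hg_C2 hg'
  have hg'cont : ContinuousOn g' (Icc 0 1) := fun u hu => (hg'diffOn u hu).continuousWithinAt
  have hxtc : Continuous xt := by rw [hxt]; fun_prop
  have hytc : Continuous yt := by rw [hyt]; fun_prop
  have hg'nn : ∀ u ∈ Icc (0:ℝ) 1, 0 ≤ g' u :=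
    fun u hu => stmt14_aux_gprime_nonneg hg_mono hg' hu
  rcases le_total |Δy| |Δx| with hle | hle
  · -- case 1 : |Δy| ≤ |Δx| ; use the licensee's marginal payoff along the segment
    have hΔxne : Δx ≠ 0 := by
      intro h0
      have h2 : Δy = 0 := by
        rw [h0] at hle
        simpa using le_antisymm (by simpa using hle) (abs_nonneg Δy)
      apply hne
      apply Prod.ext
      · rw [hΔx] at h0; linarith
      · rw [hΔy] at h2; linarith
    set Gf : ℝ → ℝ := fun t => (Uslx (xt t) 0 - (1-δ) * (yt t * g (yt t))) * Δx with hGf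
    set DG : ℝ → ℝ :=
      fun t => (Uslxx (xt t) 0 * Δx - (1-δ) * ((g (yt t) + yt t * g' (yt t)) * Δy)) * Δx with hDG
    have hGc : ContinuousOn Gf (Icc 0 1) := by
      rw [hGf]
      apply ContinuousOn.mul _ continuousOn_const
      apply ContinuousOn.sub
      · exact (show ContinuousOn (fun u => Uslx u 0) (Icc 0 1) from
          fun u hu => (hUslxx 0 h0I u hu).continuousWithinAt).comp hxtc.continuousOn hmapx
      · exact continuousOn_const.mul
          (hytc.continuousOn.mul (hgcont.comp hytc.continuousOn hmapy))
    have hGd : ∀ τ ∈ Ioo (0:ℝ) 1, HasDerivAt Gf (DG τ) τ := by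
      intro τ hτ
      have hτI : τ ∈ Icc (0:ℝ) 1 := Ioo_subset_Icc_self hτ
      have hXI := hmapx hτI
      have hYI := hmapy hτI
      have h1 : HasDerivWithinAt (fun t => Uslx (xt t) 0) (Uslxx (xt τ) 0 * Δx) (Icc 0 1) τ := by
        have := (hUslxx 0 h0I (xt τ) hXI).comp τ (hxtD τ).hasDerivWithinAt hmapx
        simpa [Function.comp_def] using this
      have h2 : HasDerivWithinAt (fun t => yt t * g (yt t))
          ((g (yt τ) + yt τ * g' (yt τ)) * Δy) (Icc 0 1) τ := by
        have hin : HasDerivWithinAt (fun u : ℝ => u * g u)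
            (g (yt τ) + yt τ * g' (yt τ)) (Icc 0 1) (yt τ) := by
          simpa [Pi.mul_def] using (hasDerivWithinAt_id (yt τ) (Icc (0:ℝ) 1)).mul (hg' (yt τ) hYI)
        have := hin.comp τ (hytD τ).hasDerivWithinAt hmapy
        simpa [Function.comp_def] using this
      have h3 := (h1.sub (h2.const_mul (1-δ))).mul_const Δx
      rw [hGf, hDG]
      exact h3.hasDerivAt (Icc_mem_nhds hτ.1 hτ.2)
    obtain ⟨τ, hτ, heq⟩ := exists_hasDerivAt_eq_slope Gf DG one_pos hGc hGd
    have hG0 : Gf 0 = Uslx p.1 p.2 * Δx := by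
      simp only [hGf, hxt0, hyt0]
      rw [stmt14_aux_keyA RL f g cl δ Uslx hUslx p.1 hp1I p.2 hp2I 0 h0I]
      ring
    have hG1 : Gf 1 = Uslx q.1 q.2 * Δx := by
      simp only [hGf, hxt1, hyt1]
      rw [stmt14_aux_keyA RL f g cl δ Uslx hUslx q.1 hq1I q.2 hq2I 0 h0I]
      ring
    have hVIp : Uslx p.1 p.2 * Δx ≤ 0 := by
      have := stmt14_aux_VI hp1I hq1I hpx (hUslx p.2 hp2I p.1 hp1I)
      rw [hΔx]; exact this
    have hVIq : 0 ≤ Uslx q.1 q.2 * Δx := by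
      have h := stmt14_aux_VI hq1I hp1I hqx (hUslx q.2 hq2I q.1 hq1I)
      rw [hΔx]; linarith [h]
    have hDGnn : 0 ≤ DG τ := by
      rw [heq, hG1, hG0]
      apply div_nonneg _ (by norm_num)
      linarith
    have hτI : τ ∈ Icc (0:ℝ) 1 := Ioo_subset_Icc_self hτ
    have hXI := hmapx hτI
    have hYI := hmapy hτI
    have hdom1 : -Uslxx (xt τ) (yt τ) > (1-δ) * (g (yt τ) + yt τ * g' (yt τ)) := by
      simpa using (hdom _ (hseg τ hτI)).1
    have hkB : Uslxx (xt τ) 0 = Uslxx (xt τ) (yt τ) :=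
      stmt14_aux_keyB RL f g cl δ Uslx Uslxx hUslx hUslxx (xt τ) hXI 0 h0I (yt τ) hYI
    have hgY := hg_pos _ hYI
    have hg'Y := hg'nn _ hYI
    have hsq : 0 < Δx^2 := by positivity
    have habs : |Δy * Δx| ≤ Δx^2 := by
      rw [abs_mul]
      calc |Δy| * |Δx| ≤ |Δx| * |Δx| := mul_le_mul_of_nonneg_right hle (abs_nonneg _)
        _ = Δx^2 := by rw [abs_mul_abs_self]; ring
    have hlb : -(Δx^2) ≤ Δy * Δx := (abs_le.mp habs).1
    have hDGval : DG τ = Uslxx (xt τ) (yt τ) * Δx^2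
        - ((1-δ) * (g (yt τ) + yt τ * g' (yt τ))) * (Δy * Δx) := by
      simp only [hDG]
      rw [hkB]
      ring
    have hcnn : 0 ≤ (1-δ) * (g (yt τ) + yt τ * g' (yt τ)) :=
      mul_nonneg (by linarith) (by linarith [mul_nonneg hYI.1 hg'Y, hgY])
    have hmul : -(((1-δ) * (g (yt τ) + yt τ * g' (yt τ))) * Δx^2)
        ≤ ((1-δ) * (g (yt τ) + yt τ * g' (yt τ))) * (Δy * Δx) := by
      have h := mul_le_mul_of_nonneg_left hlb hcnn
      linarith [h]
    have hlt : Uslxx (xt τ) (yt τ) * Δx^2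
        < -(((1-δ) * (g (yt τ) + yt τ * g' (yt τ))) * Δx^2) := by
      have h := mul_lt_mul_of_pos_right
        (show Uslxx (xt τ) (yt τ) < -((1-δ) * (g (yt τ) + yt τ * g' (yt τ))) by linarith) hsq
      linarith [h]
    linarith [hDGnn, hDGval, hmul, hlt]
  · -- case 2 : |Δx| ≤ |Δy| ; use the database's marginal payoff along the segment
    have hΔyne : Δy ≠ 0 := by
      intro h0
      have h2 : Δx = 0 := by
        rw [h0] at hle
        simpa using le_antisymm (by simpa using hle) (abs_nonneg Δx)
      apply hne
      apply Prod.ext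
      · rw [hΔx] at h2; linarith
      · rw [hΔy] at h0; linarith
    set Hf : ℝ → ℝ :=
      fun t => (Udby 0 (yt t) - (1+δ) * (xt t * (g (yt t) + yt t * g' (yt t)))) * Δy with hHf
    set DH : ℝ → ℝ :=
      fun t => (Udbyy (xt t) (yt t) * Δy - (1+δ) * ((g (yt t) + yt t * g' (yt t)) * Δx)) * Δy
      with hDH
    have hHfeq : ∀ t ∈ Icc (0:ℝ) 1, Hf t = Udby (xt t) (yt t) * Δy := by
      intro t ht
      simp only [hHf]
      rw [stmt14_aux_keyC RL f g g' ca cl δ Udby hg' hUdby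
        (yt t) (hmapy ht) (xt t) (hmapx ht) 0 h0I]
      ring
    have hHc : ContinuousOn Hf (Icc 0 1) := by
      rw [hHf]
      apply ContinuousOn.mul _ continuousOn_const
      apply ContinuousOn.sub
      · exact (show ContinuousOn (fun u => Udby 0 u) (Icc 0 1) from
          fun u hu => (hUdbyy 0 h0I u hu).continuousWithinAt).comp hytc.continuousOn hmapy
      · apply continuousOn_const.mul
        apply ContinuousOn.mul hxtc.continuousOn
        exact (hgcont.comp hytc.continuousOn hmapy).add
          (hytc.continuousOn.mul (hg'cont.comp hytc.continuousOn hmapy))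
    have hHd : ∀ τ ∈ Ioo (0:ℝ) 1, HasDerivAt Hf (DH τ) τ := by
      intro τ hτ
      have hτI : τ ∈ Icc (0:ℝ) 1 := Ioo_subset_Icc_self hτ
      have hXI := hmapx hτI
      have hYI := hmapy hτI
      have hv1 : HasDerivWithinAt (fun t => g (yt t)) (g' (yt τ) * Δy) (Icc 0 1) τ := by
        have := (hg' (yt τ) hYI).comp τ (hytD τ).hasDerivWithinAt hmapy
        simpa [Function.comp_def] using this
      have hv2a : HasDerivWithinAt (fun t => g' (yt t))
          (derivWithin g' (Icc 0 1) (yt τ) * Δy) (Icc 0 1) τ := by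
        have := ((hg'diffOn (yt τ) hYI).hasDerivWithinAt).comp τ (hytD τ).hasDerivWithinAt hmapy
        simpa [Function.comp_def] using this
      have hv : HasDerivWithinAt (fun t => g (yt t) + yt t * g' (yt t))
          (g' (yt τ) * Δy + (Δy * g' (yt τ) + yt τ * (derivWithin g' (Icc 0 1) (yt τ) * Δy)))
          (Icc 0 1) τ := hv1.add (((hytD τ).hasDerivWithinAt).mul hv2a)
      have hu : HasDerivWithinAt (fun t => xt τ - xt t) (-Δx) (Icc 0 1) τ :=
        ((hxtD τ).const_sub (xt τ)).hasDerivWithinAt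
      have huv := hu.mul hv
      have hterm1 : HasDerivWithinAt (fun t => Udby (xt τ) (yt t))
          (Udbyy (xt τ) (yt τ) * Δy) (Icc 0 1) τ := by
        have := (hUdbyy (xt τ) hXI (yt τ) hYI).comp τ (hytD τ).hasDerivWithinAt hmapy
        simpa [Function.comp_def] using this
      have hHτ := (hterm1.add (huv.const_mul (1+δ))).mul_const Δy
      have heqfun : ∀ t ∈ Icc (0:ℝ) 1, Hf t
          = (Udby (xt τ) (yt t) + (1+δ) * ((xt τ - xt t) * (g (yt t) + yt t * g' (yt t)))) * Δy := by
        intro t ht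
        rw [hHfeq t ht, stmt14_aux_keyC RL f g g' ca cl δ Udby hg' hUdby
          (yt t) (hmapy ht) (xt t) (hmapx ht) (xt τ) hXI]
        ring
      have hHd1 : HasDerivWithinAt Hf
          ((Udbyy (xt τ) (yt τ) * Δy + (1+δ) * (-Δx * (g (yt τ) + yt τ * g' (yt τ))
            + (xt τ - xt τ) * (g' (yt τ) * Δy + (Δy * g' (yt τ)
              + yt τ * (derivWithin g' (Icc 0 1) (yt τ) * Δy))))) * Δy) (Icc 0 1) τ :=
        hHτ.congr (fun t ht => heqfun t ht) (heqfun τ hτI)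
      have hval : (Udbyy (xt τ) (yt τ) * Δy + (1+δ) * (-Δx * (g (yt τ) + yt τ * g' (yt τ))
            + (xt τ - xt τ) * (g' (yt τ) * Δy + (Δy * g' (yt τ)
              + yt τ * (derivWithin g' (Icc 0 1) (yt τ) * Δy))))) * Δy = DH τ := by
        simp only [hDH, sub_self, zero_mul, add_zero]
        ring
      have hfin := hHd1.hasDerivAt (Icc_mem_nhds hτ.1 hτ.2)
      rwa [hval] at hfin
    obtain ⟨τ, hτ, heq⟩ := exists_hasDerivAt_eq_slope Hf DH one_pos hHc hHd
    have hH0 : Hf 0 = Udby p.1 p.2 * Δy := by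
      rw [hHfeq 0 h0I, hxt0, hyt0]
    have hH1 : Hf 1 = Udby q.1 q.2 * Δy := by
      rw [hHfeq 1 h1I, hxt1, hyt1]
    have hVIp : Udby p.1 p.2 * Δy ≤ 0 := by
      have := stmt14_aux_VI hp2I hq2I hpy (hUdby p.1 hp1I p.2 hp2I)
      rw [hΔy]; exact this
    have hVIq : 0 ≤ Udby q.1 q.2 * Δy := by
      have h := stmt14_aux_VI hq2I hp2I hqy (hUdby q.1 hq1I q.2 hq2I)
      rw [hΔy]; linarith [h]
    have hDHnn : 0 ≤ DH τ := by
      rw [heq, hH1, hH0]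
      apply div_nonneg _ (by norm_num)
      linarith
    have hτI : τ ∈ Icc (0:ℝ) 1 := Ioo_subset_Icc_self hτ
    have hXI := hmapx hτI
    have hYI := hmapy hτI
    have hdom2 : -Udbyy (xt τ) (yt τ) > (1+δ) * (g (yt τ) + yt τ * g' (yt τ)) := by
      simpa using (hdom _ (hseg τ hτI)).2
    have hgY := hg_pos _ hYI
    have hg'Y := hg'nn _ hYI
    have hsq : 0 < Δy^2 := by positivity
    have habs : |Δx * Δy| ≤ Δy^2 := by
      rw [abs_mul]
      calc |Δx| * |Δy| ≤ |Δy| * |Δy| := mul_le_mul_of_nonneg_right hle (abs_nonneg _)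
        _ = Δy^2 := by rw [abs_mul_abs_self]; ring
    have hlb : -(Δy^2) ≤ Δx * Δy := (abs_le.mp habs).1
    have hDHval : DH τ = Udbyy (xt τ) (yt τ) * Δy^2
        - ((1+δ) * (g (yt τ) + yt τ * g' (yt τ))) * (Δx * Δy) := by
      simp only [hDH]
      ring
    have hcnn : 0 ≤ (1+δ) * (g (yt τ) + yt τ * g' (yt τ)) :=
      mul_nonneg (by linarith) (by linarith [mul_nonneg hYI.1 hg'Y, hgY])
    have hmul : -(((1+δ) * (g (yt τ) + yt τ * g' (yt τ))) * Δy^2)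
        ≤ ((1+δ) * (g (yt τ) + yt τ * g' (yt τ))) * (Δx * Δy) := by
      have h := mul_le_mul_of_nonneg_left hlb hcnn
      linarith [h]
    have hlt : Udbyy (xt τ) (yt τ) * Δy^2
        < -(((1+δ) * (g (yt τ) + yt τ * g' (yt τ))) * Δy^2) := by
      have h := mul_lt_mul_of_pos_right
        (show Udbyy (xt τ) (yt τ) < -((1+δ) * (g (yt τ) + yt τ * g' (yt τ))) by linarith) hsq
      linarith [h]
    linarith [hDHnn, hDHval, hmul, hlt]
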